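/- arXiv:1505.04121 — 6 statements merged into one kernel-verified Lean document; each statement's English description precedes it below -/
import Mathlib

section
/- The limit of q at the origin exists and equals L through all nonzero points if and only if it exists and equals L along the real discriminant set. Precisely: Tendsto q (𝓝[{v : v ≠ O}] O) (𝓝 L) if and only if Tendsto q (𝓝[X(q)_ℝ \ {O}] O) (𝓝 L). -/
open MvPolynomial Filter Topology

/-- The quotient `q(v) = f(v)/g(v)`, with the convention `q(v) = 0` when `g(v) = 0`
(Lean's division by zero). -/
noncomputable def quotFun (f g : MvPolynomial (Fin 3) ℝ) (v : EuclideanSpace ℝ (Fin 3)) : ℝ :=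
  eval v f / eval v g

/-- The polynomial `f_{xᵢ,xⱼ} = xᵢ(g ∂f/∂xⱼ − f ∂g/∂xⱼ) − xⱼ(g ∂f/∂xᵢ − f ∂g/∂xᵢ)`. -/
noncomputable def minorPoly (f g : MvPolynomial (Fin 3) ℝ) (i j : Fin 3) :
    MvPolynomial (Fin 3) ℝ :=
  X i * (g * pderiv j f - f * pderiv j g) - X j * (g * pderiv i f - f * pderiv i g)

/-- The real discriminant set `X(q)_ℝ` : common real zeros of the three minor polynomials. -/
noncomputable def discrimSet (f g : MvPolynomial (Fin 3) ℝ) : Set (EuclideanSpace ℝ (Fin 3)) :=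
  {v | eval v (minorPoly f g 0 1) = 0 ∧ eval v (minorPoly f g 0 2) = 0 ∧
       eval v (minorPoly f g 1 2) = 0}

noncomputable def evalD (p : MvPolynomial (Fin 3) ℝ) (v : EuclideanSpace ℝ (Fin 3)) :
    EuclideanSpace ℝ (Fin 3) →L[ℝ] ℝ :=
  ∑ j, eval v (pderiv j p) • EuclideanSpace.proj j

lemma evalD_apply_single (p : MvPolynomial (Fin 3) ℝ) (v : EuclideanSpace ℝ (Fin 3)) (k : Fin 3) :
    evalD p v (EuclideanSpace.single k (1:ℝ)) = eval v (pderiv k p) := by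
  simp [evalD, PiLp.proj_apply, EuclideanSpace.single_apply]

lemma hasStrictFDerivAt_evalP (p : MvPolynomial (Fin 3) ℝ) (v : EuclideanSpace ℝ (Fin 3)) :
    HasStrictFDerivAt (fun w : EuclideanSpace ℝ (Fin 3) => eval w p) (evalD p v) v := by
  induction p using MvPolynomial.induction_on with
  | C a =>
      have h : evalD (C a : MvPolynomial (Fin 3) ℝ) v = 0 := by
        simp [evalD]
      rw [h]
      simpa using hasStrictFDerivAt_const a v
  | add p q hp hq =>
      have h : evalD (p + q) v = evalD p v + evalD q v := by
        simp [evalD, Finset.sum_add_distrib, add_smul]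
      rw [h]
      have := hp.add hq
      simp only [eval_add]
      exact this
  | mul_X p i hp =>
      have hX0 := (EuclideanSpace.proj (𝕜 := ℝ) (ι := Fin 3) i).hasStrictFDerivAt (x := v)
      have hX : HasStrictFDerivAt (fun w : EuclideanSpace ℝ (Fin 3) => w i)
          (EuclideanSpace.proj i : EuclideanSpace ℝ (Fin 3) →L[ℝ] ℝ) v := hX0
      have hmul := hp.mul hX
      have hfun : (fun w : EuclideanSpace ℝ (Fin 3) => eval w (p * X i))
          = fun w : EuclideanSpace ℝ (Fin 3) => eval w p * w i := by
        funext w; simp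
      have h : evalD (p * X i) v = eval v p • EuclideanSpace.proj i + (v i) • evalD p v := by
        ext w
        simp [evalD, pderiv_mul, pderiv_X, Fin.sum_univ_three, Pi.single_apply,
          PiLp.proj_apply]
        fin_cases i <;> simp <;> ring
      rw [hfun, h]
      exact hmul

noncomputable def sqNormPoly : MvPolynomial (Fin 3) ℝ := X 0 * X 0 + X 1 * X 1 + X 2 * X 2

lemma eval_sqNormPoly (w : EuclideanSpace ℝ (Fin 3)) : eval w sqNormPoly = ‖w‖ ^ 2 := by
  rw [EuclideanSpace.norm_eq, Real.sq_sqrt (by positivity)]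
  simp [sqNormPoly, Fin.sum_univ_three, Real.norm_eq_abs, sq_abs]
  ring

lemma pderiv_sqNormPoly_eval (v : EuclideanSpace ℝ (Fin 3)) (k : Fin 3) :
    eval v (pderiv k sqNormPoly) = 2 * v k := by
  fin_cases k <;>
    simp [sqNormPoly, pderiv_mul, pderiv_X, Fin.sum_univ_three, Pi.single_apply] <;> ring

lemma quot_hasStrictFDerivAt (f g : MvPolynomial (Fin 3) ℝ) (v : EuclideanSpace ℝ (Fin 3))
    (hgv : eval v g ≠ 0) :
    HasStrictFDerivAt (quotFun f g)
      ((eval v f) • ((-((eval v g)^2)⁻¹) • evalD g v) + ((eval v g)⁻¹) • evalD f v) v := by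
  have hinv : HasStrictDerivAt (fun x : ℝ => x⁻¹) (-((eval v g)^2)⁻¹) (eval v g) :=
    hasStrictDerivAt_inv hgv
  have hg' := hinv.comp_hasStrictFDerivAt v (hasStrictFDerivAt_evalP g v)
  have hq := (hasStrictFDerivAt_evalP f v).mul hg'
  have hfun : quotFun f g = fun w : EuclideanSpace ℝ (Fin 3) => eval w f * ((fun x : ℝ => x⁻¹) ∘ fun w : EuclideanSpace ℝ (Fin 3) => eval w g) w := by
    funext w; simp [quotFun, div_eq_mul_inv, Function.comp]
  rw [hfun]
  exact hq

lemma extr_mem_discrim (f g : MvPolynomial (Fin 3) ℝ) (v : EuclideanSpace ℝ (Fin 3))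
    (hv : v ≠ 0) (hgv : eval v g ≠ 0)
    (hextr : IsLocalExtrOn (quotFun f g) (Metric.sphere (0 : EuclideanSpace ℝ (Fin 3)) ‖v‖) v) :
    ∀ i j : Fin 3,
      eval v (X i * (g * pderiv j f - f * pderiv j g) - X j * (g * pderiv i f - f * pderiv i g))
        = 0 := by
  have hset : {x : EuclideanSpace ℝ (Fin 3) | eval x sqNormPoly = eval v sqNormPoly}
      = Metric.sphere (0 : EuclideanSpace ℝ (Fin 3)) ‖v‖ := by
    ext w
    simp only [Set.mem_setOf_eq, Metric.mem_sphere, dist_zero_right, eval_sqNormPoly]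
    constructor
    · intro h
      have := congrArg Real.sqrt h
      rwa [Real.sqrt_sq (norm_nonneg _), Real.sqrt_sq (norm_nonneg _)] at this
    · intro h; rw [h]
  rw [← hset] at hextr
  obtain ⟨a, b, hab, heq⟩ := hextr.exists_multipliers_of_hasStrictFDerivAt_1d
    (hasStrictFDerivAt_evalP sqNormPoly v) (quot_hasStrictFDerivAt f g v hgv)
  set G := eval v g with hG
  set fv := eval v f with hfv
  have h : ∀ k : Fin 3, a * (2 * v k)
      + b * (fv * (-(G ^ 2)⁻¹ * eval v (pderiv k g)) + G⁻¹ * eval v (pderiv k f)) = 0 := by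
    intro k
    have := DFunLike.congr_fun heq (EuclideanSpace.single k (1:ℝ))
    simp only [ContinuousLinearMap.add_apply, ContinuousLinearMap.smul_apply, smul_eq_mul,
      ContinuousLinearMap.zero_apply, ContinuousLinearMap.neg_apply,
      evalD_apply_single, pderiv_sqNormPoly_eval, mul_assoc, neg_mul, mul_neg] at this
    linear_combination this
  have hb : b ≠ 0 := by
    intro hb0
    have ha : a ≠ 0 := by
      intro ha0; exact hab (by simp [ha0, hb0, Prod.ext_iff])
    apply hv
    ext k
    have hk := h k
    rw [hb0] at hk
    simp only [zero_mul, add_zero] at hk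
    have : v k = 0 := by
      rcases mul_eq_zero.mp hk with h1 | h2
      · exact absurd h1 ha
      · linarith
    simpa using this
  have key : ∀ k : Fin 3,
      b * (G * eval v (pderiv k f) - fv * eval v (pderiv k g)) = -(2 * a * v k * G ^ 2) := by
    intro k
    have hGY : G ^ 2 * (fv * (-(G ^ 2)⁻¹ * eval v (pderiv k g)) + G⁻¹ * eval v (pderiv k f))
        = G * eval v (pderiv k f) - fv * eval v (pderiv k g) := by
      field_simp
      ring
    have h2 : b * (fv * (-(G ^ 2)⁻¹ * eval v (pderiv k g)) + G⁻¹ * eval v (pderiv k f))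
        = -(a * (2 * v k)) := by linarith [h k]
    calc b * (G * eval v (pderiv k f) - fv * eval v (pderiv k g))
        = G ^ 2 * (b * (fv * (-(G ^ 2)⁻¹ * eval v (pderiv k g)) + G⁻¹ * eval v (pderiv k f))) := by
          rw [← hGY]; ring
      _ = G ^ 2 * -(a * (2 * v k)) := by rw [h2]
      _ = -(2 * a * v k * G ^ 2) := by ring
  intro i j
  have ki := key i
  have kj := key j
  have hbz : b * eval v (X i * (g * pderiv j f - f * pderiv j g)
      - X j * (g * pderiv i f - f * pderiv i g)) = 0 := by
    simp only [eval_sub, eval_mul, eval_X, ← hG, ← hfv]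
    linear_combination v i * kj - v j * ki
  exact (mul_eq_zero.mp hbz).resolve_left hb

lemma extr_mem_discrimSet (f g : MvPolynomial (Fin 3) ℝ) (v : EuclideanSpace ℝ (Fin 3))
    (hv : v ≠ 0) (hgv : eval v g ≠ 0)
    (hextr : IsLocalExtrOn (quotFun f g) (Metric.sphere (0 : EuclideanSpace ℝ (Fin 3)) ‖v‖) v) :
    v ∈ discrimSet f g := by
  have h := extr_mem_discrim f g v hv hgv hextr
  exact ⟨by simpa [minorPoly] using h 0 1, by simpa [minorPoly] using h 0 2,
    by simpa [minorPoly] using h 1 2⟩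

/-- The limit of `q` at the origin exists and equals `L` through all nonzero points iff it
exists and equals `L` along the real discriminant set. -/
theorem limit_iff_limit_along_discriminant (f g : MvPolynomial (Fin 3) ℝ)
    (hg : ∃ ε > 0, ∀ v ∈ Metric.ball (0 : EuclideanSpace ℝ (Fin 3)) ε, eval v g = 0 → v = 0)
    (L : ℝ) :
    Tendsto (quotFun f g) (𝓝[{v : EuclideanSpace ℝ (Fin 3) | v ≠ 0}] 0) (𝓝 L) ↔
      Tendsto (quotFun f g) (𝓝[discrimSet f g \ {0}] 0) (𝓝 L) := by
  constructor
  · intro h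
    exact h.mono_left (nhdsWithin_mono _ (fun v hv => hv.2))
  · intro h
    obtain ⟨ε, hε, hgz⟩ := hg
    rw [Metric.tendsto_nhdsWithin_nhds] at h ⊢
    intro δ hδ
    obtain ⟨r₁, hr₁, H⟩ := h δ hδ
    refine ⟨min r₁ ε, lt_min hr₁ hε, ?_⟩
    intro v hvne hvdist
    rw [dist_zero_right] at hvdist
    replace hvne : v ≠ 0 := hvne
    have hR : (0:ℝ) < ‖v‖ := norm_pos_iff.mpr hvne
    have hRr₁ : ‖v‖ < r₁ := lt_of_lt_of_le hvdist (min_le_left _ _)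
    have hRε : ‖v‖ < ε := lt_of_lt_of_le hvdist (min_le_right _ _)
    set S := Metric.sphere (0 : EuclideanSpace ℝ (Fin 3)) ‖v‖ with hS
    have hnorm_mem : ∀ w, w ∈ S → ‖w‖ = ‖v‖ := by
      intro w hw
      simpa [hS, Metric.mem_sphere, dist_zero_right] using hw
    have hgne : ∀ w, w ∈ S → eval w g ≠ 0 := by
      intro w hw hz
      have hwnorm := hnorm_mem w hw
      have hwball : w ∈ Metric.ball (0 : EuclideanSpace ℝ (Fin 3)) ε := by
        simp [Metric.mem_ball, dist_zero_right, hwnorm, hRε]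
      have := hgz w hwball hz
      rw [this] at hwnorm
      simp at hwnorm
      exact hR.ne' hwnorm.symm
    have hcont : ContinuousOn (quotFun f g) S := by
      apply ContinuousOn.div
      · exact fun w _ => ((hasStrictFDerivAt_evalP f w).continuousAt).continuousWithinAt
      · exact fun w _ => ((hasStrictFDerivAt_evalP g w).continuousAt).continuousWithinAt
      · exact hgne
    have hcompact : IsCompact S := isCompact_sphere _ _
    have hSne : S.Nonempty := ⟨v, by simp [hS, Metric.mem_sphere, dist_zero_right]⟩
    obtain ⟨w₁, hw₁S, hw₁max⟩ := hcompact.exists_isMaxOn hSne hcont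
    obtain ⟨w₂, hw₂S, hw₂min⟩ := hcompact.exists_isMinOn hSne hcont
    have hwd : ∀ w, w ∈ S → (IsLocalExtrOn (quotFun f g) S w) → dist (quotFun f g w) L < δ := by
      intro w hwS hextr
      have hwnorm := hnorm_mem w hwS
      have hwne : w ≠ 0 := by
        intro h0; rw [h0] at hwnorm; simp at hwnorm; exact hR.ne' hwnorm.symm
      have hmem : w ∈ discrimSet f g := by
        apply extr_mem_discrimSet f g w hwne (hgne w hwS)
        rwa [hwnorm]
      exact H ⟨hmem, hwne⟩ (by rw [dist_zero_right, hwnorm]; exact hRr₁)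
    have h1 : dist (quotFun f g w₁) L < δ := hwd w₁ hw₁S (Or.inr hw₁max.localize)
    have h2 : dist (quotFun f g w₂) L < δ := hwd w₂ hw₂S (Or.inl hw₂min.localize)
    have hvS : v ∈ S := by simp [hS, Metric.mem_sphere, dist_zero_right]
    have hub : quotFun f g v ≤ quotFun f g w₁ := hw₁max hvS
    have hlb : quotFun f g w₂ ≤ quotFun f g v := hw₂min hvS
    rw [Real.dist_eq] at h1 h2 ⊢
    rw [abs_sub_lt_iff] at h1 h2 ⊢
    constructor <;> linarith [h1.1, h1.2, h2.1, h2.2]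
end

section
/- Let r > 0 and let S_r = {v ∈ ℝ³ : ‖v‖ = r}; assume g(v) ≠ 0 for all v ∈ S_r. If p ∈ S_r and the restriction of q to S_r attains a maximum at p (IsMaxOn q S_r p) or a minimum at p (IsMinOn q S_r p), then p ∈ X(q)_ℝ, i.e., f_{x,y}(p) = f_{x,z}(p) = f_{y,z}(p) = 0. -/
open MvPolynomial Filter Topology

noncomputable def gradCLM (q : MvPolynomial (Fin 3) ℝ) (p : EuclideanSpace ℝ (Fin 3)) :
    EuclideanSpace ℝ (Fin 3) →L[ℝ] ℝ :=
  ∑ i, eval (p : Fin 3 → ℝ) (pderiv i q) •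
    (EuclideanSpace.proj i : EuclideanSpace ℝ (Fin 3) →L[ℝ] ℝ)

lemma gradCLM_apply (q : MvPolynomial (Fin 3) ℝ) (p v : EuclideanSpace ℝ (Fin 3)) :
    gradCLM q p v = ∑ i, eval (p : Fin 3 → ℝ) (pderiv i q) * v i := by
  simp [gradCLM]

lemma hasStrictFDerivAt_eval (q : MvPolynomial (Fin 3) ℝ) (p : EuclideanSpace ℝ (Fin 3)) :
    HasStrictFDerivAt (fun v : EuclideanSpace ℝ (Fin 3) => eval (v : Fin 3 → ℝ) q)
      (gradCLM q p) p := by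
  induction q using MvPolynomial.induction_on with
  | C a =>
      have : gradCLM (C a) p = 0 := by
        ext v; simp [gradCLM_apply]
      rw [this]
      simpa using hasStrictFDerivAt_const a p
  | add q1 q2 h1 h2 =>
      have : gradCLM (q1 + q2) p = gradCLM q1 p + gradCLM q2 p := by
        ext v; simp [gradCLM_apply, add_mul, Finset.sum_add_distrib]
      rw [this]
      exact (h1.add h2).congr_of_eventuallyEq (Filter.Eventually.of_forall fun v => by simp)
  | mul_X q i h =>
      have hproj : HasStrictFDerivAt (fun v : EuclideanSpace ℝ (Fin 3) => v i)
          (EuclideanSpace.proj i : EuclideanSpace ℝ (Fin 3) →L[ℝ] ℝ) p :=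
        (EuclideanSpace.proj i : EuclideanSpace ℝ (Fin 3) →L[ℝ] ℝ).hasStrictFDerivAt
      have hmul := h.mul hproj
      have : gradCLM (q * X i) p =
          eval (p : Fin 3 → ℝ) q • (EuclideanSpace.proj i : EuclideanSpace ℝ (Fin 3) →L[ℝ] ℝ)
            + p i • gradCLM q p := by
        ext v
        simp only [gradCLM_apply, ContinuousLinearMap.add_apply, ContinuousLinearMap.coe_smul',
          Pi.smul_apply, PiLp.proj_apply, smul_eq_mul, pderiv_mul, pderiv_X,
          Finset.mul_sum]
        rw [Fin.sum_univ_three, Fin.sum_univ_three]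
        fin_cases i <;> simp [Pi.single_apply] <;> ring
      rw [this]
      exact hmul.congr_of_eventuallyEq (Filter.Eventually.of_forall fun v => by simp)

noncomputable def sphPoly : MvPolynomial (Fin 3) ℝ := X 0 ^ 2 + X 1 ^ 2 + X 2 ^ 2

lemma eval_sphPoly (v : EuclideanSpace ℝ (Fin 3)) :
    eval (v : Fin 3 → ℝ) sphPoly = ‖v‖ ^ 2 := by
  rw [EuclideanSpace.norm_eq, Real.sq_sqrt (by positivity)]
  simp [sphPoly, Fin.sum_univ_three]

lemma gradCLM_single (q : MvPolynomial (Fin 3) ℝ) (p : EuclideanSpace ℝ (Fin 3)) (i : Fin 3) :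
    gradCLM q p (EuclideanSpace.single i 1) = eval (p : Fin 3 → ℝ) (pderiv i q) := by
  rw [gradCLM_apply]
  rw [Finset.sum_eq_single i]
  · simp
  · intro j _ hj; simp [EuclideanSpace.single_apply]; tauto
  · simp

/-- If `g` does not vanish on the sphere of radius `r` and the restriction of `q` to this
sphere attains a maximum or a minimum at `p`, then `p` lies in the real discriminant set
`X(q)_ℝ`, i.e. the three minor polynomials vanish at `p`. -/
theorem mem_discrim_of_extremum_on_sphere (f g : MvPolynomial (Fin 3) ℝ) (r : ℝ) (hr : 0 < r)
    (hg : ∀ v : EuclideanSpace ℝ (Fin 3), ‖v‖ = r → eval v g ≠ 0)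
    (p : EuclideanSpace ℝ (Fin 3)) (hp : ‖p‖ = r)
    (hext : IsMaxOn (quotFun f g) {v : EuclideanSpace ℝ (Fin 3) | ‖v‖ = r} p ∨
            IsMinOn (quotFun f g) {v : EuclideanSpace ℝ (Fin 3) | ‖v‖ = r} p) :
    eval p (minorPoly f g 0 1) = 0 ∧ eval p (minorPoly f g 0 2) = 0 ∧
      eval p (minorPoly f g 1 2) = 0 := by
  have hGp : eval (p : Fin 3 → ℝ) g ≠ 0 := hg p hp
  -- the constraint set is the sphere
  have hset : {x : EuclideanSpace ℝ (Fin 3) |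
      eval (x : Fin 3 → ℝ) sphPoly = eval (p : Fin 3 → ℝ) sphPoly}
      = {v : EuclideanSpace ℝ (Fin 3) | ‖v‖ = r} := by
    ext v
    simp only [Set.mem_setOf_eq, eval_sphPoly, hp]
    constructor
    · intro h; nlinarith [norm_nonneg v]
    · intro h; rw [h]
  -- local extremum
  have hextr : IsLocalExtrOn (quotFun f g)
      {x : EuclideanSpace ℝ (Fin 3) |
        eval (x : Fin 3 → ℝ) sphPoly = eval (p : Fin 3 → ℝ) sphPoly} p := by
    rw [hset]
    rcases hext with h | h
    · exact Or.inr (h.filter_mono inf_le_right)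
    · exact Or.inl (h.filter_mono inf_le_right)
  -- derivative of quotFun at p
  have hinv : HasStrictFDerivAt (fun v : EuclideanSpace ℝ (Fin 3) => (eval (v : Fin 3 → ℝ) g)⁻¹)
      ((-(eval (p : Fin 3 → ℝ) g ^ 2)⁻¹) • gradCLM g p) p :=
    (hasStrictDerivAt_inv hGp).comp_hasStrictFDerivAt p (hasStrictFDerivAt_eval g p)
  have hq : HasStrictFDerivAt (quotFun f g)
      (eval (p : Fin 3 → ℝ) f • ((-(eval (p : Fin 3 → ℝ) g ^ 2)⁻¹) • gradCLM g p)
        + (eval (p : Fin 3 → ℝ) g)⁻¹ • gradCLM f p) p := by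
    have hfun : quotFun f g =
        fun v : EuclideanSpace ℝ (Fin 3) => eval (v : Fin 3 → ℝ) f * (eval (v : Fin 3 → ℝ) g)⁻¹ :=
      funext fun v => div_eq_mul_inv _ _
    rw [hfun]
    exact (hasStrictFDerivAt_eval f p).mul hinv
  -- Lagrange multipliers
  obtain ⟨a, b, hab, heq⟩ :=
    hextr.exists_multipliers_of_hasStrictFDerivAt_1d (hasStrictFDerivAt_eval sphPoly p) hq
  set F := eval (p : Fin 3 → ℝ) f with hF
  set G := eval (p : Fin 3 → ℝ) g with hGdef
  have hpd : ∀ i : Fin 3, eval (p : Fin 3 → ℝ) (pderiv i sphPoly) = 2 * p i := by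
    intro i
    fin_cases i <;>
      simp [sphPoly, pow_two, pderiv_mul, pderiv_X, Pi.single_apply] <;> ring
  have hb : b ≠ 0 := by
    intro hb0
    have ha : a ≠ 0 := by
      intro ha0; exact hab (by simp [ha0, hb0, Prod.ext_iff])
    have h1 := ContinuousLinearMap.ext_iff.mp heq p
    simp only [hb0, ContinuousLinearMap.add_apply, ContinuousLinearMap.coe_smul', Pi.smul_apply,
      smul_eq_mul, zero_smul, zero_mul, add_zero, ContinuousLinearMap.zero_apply] at h1
    rw [gradCLM_apply] at h1
    have hsum : (∑ i, eval (p : Fin 3 → ℝ) (pderiv i sphPoly) * p i) = 2 * r ^ 2 := by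
      have : (∑ i, eval (p : Fin 3 → ℝ) (pderiv i sphPoly) * p i)
          = 2 * eval (p : Fin 3 → ℝ) sphPoly := by
        simp only [hpd, sphPoly, Fin.sum_univ_three]
        simp [pow_two]; ring
      rw [this, eval_sphPoly, hp]
    rw [hsum] at h1
    have : a * (2 * r ^ 2) ≠ 0 := by positivity
    exact this h1
  have key : ∀ i : Fin 3,
      b * (G * eval (p : Fin 3 → ℝ) (pderiv i f) - F * eval (p : Fin 3 → ℝ) (pderiv i g))
        = -(2 * a * G ^ 2) * p i := by
    intro i
    have h1 := ContinuousLinearMap.ext_iff.mp heq (EuclideanSpace.single i 1)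
    simp only [ContinuousLinearMap.add_apply, ContinuousLinearMap.coe_smul', Pi.smul_apply,
      smul_eq_mul, ContinuousLinearMap.zero_apply, gradCLM_single, hpd] at h1
    field_simp at h1
    apply mul_left_cancel₀ hGp
    linear_combination G * h1
  have hmem : ∀ i j : Fin 3, eval (p : Fin 3 → ℝ) (minorPoly f g i j) = 0 := by
    intro i j
    have hij := key i
    have hji := key j
    have hb2 : b * eval (p : Fin 3 → ℝ) (minorPoly f g i j) = 0 := by
      simp only [minorPoly, map_sub, map_mul, map_add, eval_X, ← hF, ← hGdef]
      linear_combination p i * hji - p j * hij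
    exact (mul_eq_zero.mp hb2).resolve_left hb
  exact ⟨hmem 0 1, hmem 0 2, hmem 1 2⟩
end

section
/- For every x ∈ K that is transcendental over k, the extension K over the intermediate field k⟮x⟯ generated by x is algebraic, and there exists y ∈ K such that K = k⟮x, y⟯, i.e., the intermediate field generated over k by {x, y} is all of K. -/
open IntermediateField Polynomial

set_option maxHeartbeats 1000000
set_option synthInstance.maxHeartbeats 200000

open IntermediateField Polynomial

lemma curve_aux_core {k K : Type*} [Field k] [Field K] [Algebra k K]
    (B : Subalgebra k K) (hB : B.FG)
    {x z : K} (hxB : x ∈ B) (hzB : z ∈ B)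
    (hx : Transcendental k x)
    (hz : Transcendental (↥(IntermediateField.adjoin k {x})) z) :
    ∃ p q : Ideal B, p.IsPrime ∧ q.IsPrime ∧ ⊥ < p ∧ p < q := by
  set L : IntermediateField k K := IntermediateField.adjoin k {x} with hL
  have hxL : x ∈ L := IntermediateField.mem_adjoin_simple_self k x
  set C : Subalgebra L K := Algebra.adjoin L (B : Set K) with hC
  have hLC : ∀ l : K, l ∈ L → l ∈ C := fun l hl => by
    have := C.algebraMap_mem ⟨l, hl⟩
    simpa using this
  have hBC : ∀ c : K, c ∈ B → c ∈ C := fun c hc => Algebra.subset_adjoin hc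
  -- C is finitely generated over L
  obtain ⟨t, ht⟩ := hB
  have hCt : C = Algebra.adjoin L (t : Set K) := by
    rw [hC, ← ht, Algebra.adjoin_adjoin_of_tower]
  have hCfg : Algebra.FiniteType L C :=
    (Subalgebra.fg_iff_finiteType C).mp ⟨t, hCt.symm⟩
  -- x-polynomials are in B and in L
  have haevalB : ∀ f : k[X], aeval x f ∈ B := fun f => by
    have h := Polynomial.aeval_subalgebra_coe f B ⟨x, hxB⟩
    rw [← h]
    exact (aeval (⟨x, hxB⟩ : B) f).2
  have haevalL : ∀ f : k[X], aeval x f ∈ L := fun f => by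
    have h := IntermediateField.aeval_coe (S := L) (⟨x, hxL⟩ : L) f
    rw [show ((⟨x, hxL⟩ : L) : K) = x from rfl] at h
    rw [h]
    exact (aeval (⟨x, hxL⟩ : L) f).2
  have haeval_ne : ∀ f : k[X], f ≠ 0 → aeval x f ≠ 0 := fun f hf h0 =>
    hx ⟨f, hf, h0⟩
  -- C is not a field (Zariski's lemma)
  have hCnf : ¬ IsField C := by
    intro hf
    letI : Field C := hf.toField
    have hfin : Module.Finite L C := finite_of_finite_type_of_isJacobsonRing L C
    have hint : IsIntegral L (⟨z, hBC z hzB⟩ : C) := IsIntegral.of_finite L _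
    have : IsIntegral L z := by
      have := hint.map (C.val)
      simpa using this
    exact hz this.isAlgebraic
  obtain ⟨P, hPbot, hP⟩ := Ring.not_isField_iff_exists_prime.mp hCnf
  -- denominators
  have hD : ∀ c : K, c ∈ C → ∃ u : K, u ∈ B ∧ u ∈ L ∧ u ≠ 0 ∧ c * u ∈ B := by
    intro c hc
    induction hc using Algebra.adjoin_induction with
    | mem c hcB => exact ⟨1, one_mem B, one_mem L, one_ne_zero, by simpa using hcB⟩
    | algebraMap r =>
      rcases eq_or_ne (algebraMap L K r) 0 with h0 | h0
      · exact ⟨1, one_mem B, one_mem L, one_ne_zero, by rw [h0, zero_mul]; exact zero_mem B⟩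
      · have hr : (r : K) ∈ L := r.2
        obtain ⟨f, g, hfg⟩ := (IntermediateField.mem_adjoin_simple_iff k (r : K)).mp hr
        have hrK : algebraMap L K r = (r : K) := rfl
        have hg0 : aeval x g ≠ 0 := by
          intro h
          rw [h, div_zero] at hfg
          exact h0 (by rw [hrK, hfg])
        refine ⟨aeval x g, haevalB g, haevalL g, hg0, ?_⟩
        rw [hrK, hfg, div_mul_cancel₀ _ hg0]
        exact haevalB f
    | add c₁ c₂ h₁ h₂ ih₁ ih₂ =>
      obtain ⟨u₁, hu₁B, hu₁L, hu₁0, hcu₁⟩ := ih₁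
      obtain ⟨u₂, hu₂B, hu₂L, hu₂0, hcu₂⟩ := ih₂
      refine ⟨u₁ * u₂, mul_mem hu₁B hu₂B, mul_mem hu₁L hu₂L, mul_ne_zero hu₁0 hu₂0, ?_⟩
      have : (c₁ + c₂) * (u₁ * u₂) = (c₁ * u₁) * u₂ + (c₂ * u₂) * u₁ := by ring
      rw [this]
      exact add_mem (mul_mem hcu₁ hu₂B) (mul_mem hcu₂ hu₁B)
    | mul c₁ c₂ h₁ h₂ ih₁ ih₂ =>
      obtain ⟨u₁, hu₁B, hu₁L, hu₁0, hcu₁⟩ := ih₁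
      obtain ⟨u₂, hu₂B, hu₂L, hu₂0, hcu₂⟩ := ih₂
      refine ⟨u₁ * u₂, mul_mem hu₁B hu₂B, mul_mem hu₁L hu₂L, mul_ne_zero hu₁0 hu₂0, ?_⟩
      have : (c₁ * c₂) * (u₁ * u₂) = (c₁ * u₁) * (c₂ * u₂) := by ring
      rw [this]
      exact mul_mem hcu₁ hcu₂
  -- the inclusion B →+* C
  let φ : B →+* C :=
    { toFun := fun b => ⟨(b : K), hBC _ b.2⟩
      map_one' := rfl
      map_mul' := fun _ _ => rfl
      map_zero' := rfl
      map_add' := fun _ _ => rfl }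
  have hφ : ∀ b : B, ((φ b : C) : K) = (b : K) := fun _ => rfl
  set p : Ideal B := P.comap φ with hp
  haveI hpPrime : p.IsPrime := Ideal.IsPrime.comap φ
  -- elements of B that are nonzero elements of L are not in p
  have hdisj : ∀ b : B, (b : K) ∈ L → (b : K) ≠ 0 → b ∉ p := by
    intro b hbL hb0 hbp
    have hinv : ((b : K))⁻¹ ∈ C := hLC _ (L.inv_mem hbL)
    have : (φ b) * ⟨((b : K))⁻¹, hinv⟩ ∈ P := P.mul_mem_right _ hbp
    have h1 : (φ b) * ⟨((b : K))⁻¹, hinv⟩ = 1 := by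
      ext
      simp [hφ, mul_inv_cancel₀ hb0]
    rw [h1] at this
    exact hP.ne_top (Ideal.eq_top_of_isUnit_mem P this isUnit_one)
  -- p ≠ ⊥
  have hpne : p ≠ ⊥ := by
    obtain ⟨c, hcP, hc0⟩ := Submodule.exists_mem_ne_zero_of_ne_bot hPbot
    obtain ⟨u, huB, huL, hu0, hcu⟩ := hD (c : K) c.2
    have hcuK : ((c : K) * u) ≠ 0 := mul_ne_zero (by simpa using hc0) hu0
    have hmem : (⟨(c : K) * u, hcu⟩ : B) ∈ p := by
      show φ _ ∈ P
      have : φ ⟨(c : K) * u, hcu⟩ = c * ⟨u, hBC u huB⟩ := rfl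
      rw [this]
      exact P.mul_mem_right _ hcP
    intro hbot
    rw [hbot] at hmem
    exact hcuK (congrArg Subtype.val (Ideal.mem_bot.mp hmem))
  -- p is not maximal
  have hpnm : ¬ p.IsMaximal := by
    intro hmax
    letI : Field (B ⧸ p) := Ideal.Quotient.field p
    haveI : Algebra.FiniteType k B := (Subalgebra.fg_iff_finiteType B).mp ⟨t, ht⟩
    haveI : Algebra.FiniteType k (B ⧸ p) :=
      Algebra.FiniteType.of_surjective (Ideal.Quotient.mkₐ k p)
        (Ideal.Quotient.mkₐ_surjective k p)
    have hfin : Module.Finite k (B ⧸ p) := finite_of_finite_type_of_isJacobsonRing k _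
    have hint : IsIntegral k (Ideal.Quotient.mkₐ k p ⟨x, hxB⟩) := IsIntegral.of_finite k _
    obtain ⟨f, hf0, hfe⟩ := hint.isAlgebraic
    rw [Polynomial.aeval_algHom_apply (Ideal.Quotient.mkₐ k p) (⟨x, hxB⟩ : B) f] at hfe
    have hfmem : aeval (⟨x, hxB⟩ : B) f ∈ p := by
      rwa [Ideal.Quotient.mkₐ_eq_mk, Ideal.Quotient.eq_zero_iff_mem] at hfe
    have hcoe : ((aeval (⟨x, hxB⟩ : B) f : B) : K) = aeval x f :=
      Polynomial.aeval_subalgebra_coe f B ⟨x, hxB⟩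
    exact hdisj _ (hcoe ▸ haevalL f) (hcoe ▸ haeval_ne f hf0) hfmem
  obtain ⟨m, hm, hpm⟩ := Ideal.exists_le_maximal p hpPrime.ne_top
  refine ⟨p, m, hpPrime, hm.isPrime, bot_lt_iff_ne_bot.mpr hpne, lt_of_le_of_ne hpm ?_⟩
  intro h
  exact hpnm (h ▸ hm)


/-- For the fraction field `K` of the coordinate ring `A` of an irreducible algebraic curve
over a field `k` of characteristic zero: for every `x ∈ K` transcendental over `k`, the
extension `K / k⟮x⟯` is algebraic and there is `y ∈ K` with `K = k⟮x, y⟯`. -/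
theorem curve_function_field_primitive_element
    (k : Type*) [Field k] [CharZero k]
    (A : Type*) [CommRing A] [IsDomain A] [Algebra k A] [Algebra.FiniteType k A]
    (hdim : ringKrullDim A = 1)
    (K : Type*) [Field K] [Algebra A K] [IsFractionRing A K]
    [Algebra k K] [IsScalarTower k A K]
    (x : K) (hx : Transcendental k x) :
    Algebra.IsAlgebraic (↥(IntermediateField.adjoin k {x})) K ∧
      ∃ y : K, IntermediateField.adjoin k {x, y} = ⊤ := by
  obtain ⟨t, ht⟩ := ‹Algebra.FiniteType k A›.out
  have hinj : Function.Injective (algebraMap A K) := IsFractionRing.injective A K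
  -- membership of images of `A` in various adjoins
  have hAmem : ∀ (S : Subalgebra k K), (algebraMap A K '' ↑t) ⊆ S → ∀ a : A,
      algebraMap A K a ∈ S := by
    intro S hS a
    have h1 : algebraMap A K a ∈ (Algebra.adjoin k (↑t : Set A)).map
        (IsScalarTower.toAlgHom k A K) := ⟨a, by rw [ht]; trivial, rfl⟩
    rw [← Algebra.adjoin_image] at h1
    have h2 : (IsScalarTower.toAlgHom k A K) '' ↑t = algebraMap A K '' ↑t := rfl
    rw [h2] at h1
    exact Algebra.adjoin_le hS h1
  -- Part 1 : K is algebraic over k(x)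
  have halg : Algebra.IsAlgebraic (↥(IntermediateField.adjoin k {x})) K := by
    rw [Algebra.isAlgebraic_def]
    by_contra h
    push_neg at h
    obtain ⟨z, hz⟩ := h
    obtain ⟨a₁, b₁, hb₁, hx1⟩ := IsFractionRing.div_surjective (A := A) x
    obtain ⟨a₂, b₂, hb₂, hz1⟩ := IsFractionRing.div_surjective (A := A) z
    obtain ⟨s0, hs0, hs0def⟩ : ∃ s0, s0 ∈ nonZeroDivisors A ∧ s0 = b₁ * b₂ :=
      ⟨b₁ * b₂, mul_mem hb₁ hb₂, rfl⟩
    have hs0K : algebraMap A K s0 ≠ 0 :=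
      IsFractionRing.to_map_ne_zero_of_mem_nonZeroDivisors hs0
    have hb₁K : algebraMap A K b₁ ≠ 0 :=
      IsFractionRing.to_map_ne_zero_of_mem_nonZeroDivisors hb₁
    have hb₂K : algebraMap A K b₂ ≠ 0 :=
      IsFractionRing.to_map_ne_zero_of_mem_nonZeroDivisors hb₂
    set G : Set K := (algebraMap A K '' ↑t) ∪ {(algebraMap A K s0)⁻¹} with hGdef
    set B : Subalgebra k K := Algebra.adjoin k G with hBdef
    have hBfg : B.FG := Subalgebra.fg_def.mpr
      ⟨G, Set.Finite.union (Set.Finite.image _ t.finite_toSet) (Set.finite_singleton _), rfl⟩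
    have hAB : ∀ a : A, algebraMap A K a ∈ B :=
      hAmem B (le_trans Set.subset_union_left Algebra.subset_adjoin)
    have hinvB : (algebraMap A K s0)⁻¹ ∈ B :=
      Algebra.subset_adjoin (Set.mem_union_right _ rfl)
    have hxB : x ∈ B := by
      have hxe : x = algebraMap A K (a₁ * b₂) * (algebraMap A K s0)⁻¹ := by
        rw [← hx1, map_mul, hs0def, map_mul]
        field_simp
      rw [hxe]
      exact mul_mem (hAB _) hinvB
    have hzB : z ∈ B := by
      have hze : z = algebraMap A K (a₂ * b₁) * (algebraMap A K s0)⁻¹ := by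
        rw [← hz1, map_mul, hs0def, map_mul]
        field_simp
      rw [hze]
      exact mul_mem (hAB _) hinvB
    obtain ⟨p, q, hpP, hqP, hbp, hpq⟩ := curve_aux_core B hBfg hxB hzB hx hz
    -- transfer the chain to A
    let ψ : A →+* B :=
      { toFun := fun a => ⟨algebraMap A K a, hAB a⟩
        map_one' := Subtype.ext (map_one _)
        map_mul' := fun a b => Subtype.ext (map_mul _ a b)
        map_zero' := Subtype.ext (map_zero _)
        map_add' := fun a b => Subtype.ext (map_add _ a b) }
    have hψ : ∀ a : A, ((ψ a : B) : K) = algebraMap A K a := fun _ => rfl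
    have hsur0 : ∀ c : K, c ∈ Algebra.adjoin k G → ∃ (n : ℕ) (a : A),
        c * (algebraMap A K s0) ^ n = algebraMap A K a := by
      intro c hb
      induction hb using Algebra.adjoin_induction with
      | mem c hc =>
        rcases hc with ⟨a, _, rfl⟩ | hc
        · exact ⟨0, a, by simp⟩
        · refine ⟨1, 1, ?_⟩
          rw [Set.mem_singleton_iff.mp hc]
          simp [inv_mul_cancel₀ hs0K]
      | algebraMap r =>
        exact ⟨0, algebraMap k A r, by simp [← IsScalarTower.algebraMap_apply]⟩
      | add c₁ c₂ h₁ h₂ ih₁ ih₂ =>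
        obtain ⟨n₁, d₁, he₁⟩ := ih₁
        obtain ⟨n₂, d₂, he₂⟩ := ih₂
        refine ⟨n₁ + n₂, d₁ * s0 ^ n₂ + d₂ * s0 ^ n₁, ?_⟩
        rw [map_add, map_mul, map_mul, map_pow, map_pow, ← he₁, ← he₂, pow_add]
        ring
      | mul c₁ c₂ h₁ h₂ ih₁ ih₂ =>
        obtain ⟨n₁, d₁, he₁⟩ := ih₁
        obtain ⟨n₂, d₂, he₂⟩ := ih₂
        refine ⟨n₁ + n₂, d₁ * d₂, ?_⟩
        rw [map_mul, ← he₁, ← he₂, pow_add]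
        ring
    have hsur : ∀ b : B, ∃ (n : ℕ) (a : A),
        ((b : K)) * (algebraMap A K s0) ^ n = algebraMap A K a := fun b => hsur0 (b : K) b.2
    have hψeq : ∀ (b : B) (n : ℕ) (a : A),
        ((b : K)) * (algebraMap A K s0) ^ n = algebraMap A K a →
        ψ a = b * (ψ s0) ^ n := by
      intro b n a hna
      ext
      push_cast [hψ]
      rw [← hna]
    have hunit : IsUnit (ψ s0) := by
      refine IsUnit.of_mul_eq_one ⟨(algebraMap A K s0)⁻¹, hinvB⟩ (Subtype.ext ?_)
      push_cast [hψ]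
      exact mul_inv_cancel₀ hs0K
    set p' : Ideal A := p.comap ψ with hp'def
    set q' : Ideal A := q.comap ψ with hq'def
    haveI hp'P : p'.IsPrime := Ideal.IsPrime.comap ψ
    haveI hq'P : q'.IsPrime := Ideal.IsPrime.comap ψ
    have hbp' : (⊥ : Ideal A) < p' := by
      obtain ⟨b, hbP, hb0⟩ := Submodule.exists_mem_ne_zero_of_ne_bot hbp.ne'
      obtain ⟨n, a, hna⟩ := hsur b
      have hψa : ψ a = b * (ψ s0) ^ n := hψeq b n a hna
      have hamem : a ∈ p' := by
        show ψ a ∈ p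
        rw [hψa]
        exact p.mul_mem_right _ hbP
      have ha0 : a ≠ 0 := by
        intro h0
        rw [h0] at hna
        have hbK : (b : K) ≠ 0 := fun hh => hb0 (Subtype.ext hh)
        exact mul_ne_zero hbK (pow_ne_zero n hs0K) (by simpa using hna)
      exact bot_lt_iff_ne_bot.mpr (fun hb => ha0 (Ideal.mem_bot.mp (hb ▸ hamem)))
    have hpq' : p' < q' := by
      refine lt_of_le_of_ne (Ideal.comap_mono hpq.le) ?_
      intro heq
      obtain ⟨b, hbq, hbp2⟩ := SetLike.exists_of_lt hpq
      obtain ⟨n, a, hna⟩ := hsur b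
      have hψa : ψ a = b * (ψ s0) ^ n := hψeq b n a hna
      have haq : a ∈ q' := by
        show ψ a ∈ q
        rw [hψa]
        exact q.mul_mem_right _ hbq
      rw [← heq] at haq
      have hbsp : b * (ψ s0) ^ n ∈ p := by
        rw [← hψa]
        exact haq
      rcases hpP.mem_or_mem hbsp with hmem | hmem
      · exact hbp2 hmem
      · exact hpP.ne_top (p.eq_top_of_isUnit_mem hmem (hunit.pow n))
    let ch : LTSeries (PrimeSpectrum A) :=
      { length := 2
        toFun := ![⟨⊥, Ideal.bot_prime⟩, ⟨p', hp'P⟩, ⟨q', hq'P⟩]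
        step := by
          intro i
          fin_cases i
          · exact hbp'
          · exact hpq' }
    have h2 := Order.LTSeries.length_le_krullDim ch
    rw [show Order.krullDim (PrimeSpectrum A) = ringKrullDim A from rfl, hdim] at h2
    norm_num at h2
  refine ⟨halg, ?_⟩
  -- Part 2 : primitive element
  set L : IntermediateField k K := IntermediateField.adjoin k {x} with hLdef
  haveI : CharZero K := charZero_of_injective_algebraMap (algebraMap k K).injective
  haveI : CharZero L := charZero_of_injective_algebraMap (algebraMap k L).injective
  haveI halgL : Algebra.IsAlgebraic L K := halg
  set S : Set K := algebraMap A K '' ↑t with hSdef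
  haveI : Finite ↥S := (t.finite_toSet.image _).to_subtype
  have hadj : ∀ c : K, c ∈ Algebra.adjoin k S → c ∈ IntermediateField.adjoin L S := by
    intro c hc
    induction hc using Algebra.adjoin_induction with
    | mem c hc => exact IntermediateField.subset_adjoin _ _ hc
    | algebraMap r =>
      have hr : algebraMap k K r = algebraMap L K (algebraMap k L r) := by
        rw [← IsScalarTower.algebraMap_apply]
      rw [hr]
      exact (IntermediateField.adjoin L S).algebraMap_mem _
    | add c₁ c₂ _ _ ih₁ ih₂ => exact add_mem ih₁ ih₂
    | mul c₁ c₂ _ _ ih₁ ih₂ => exact mul_mem ih₁ ih₂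
  have hmem : ∀ a : A, algebraMap A K a ∈ IntermediateField.adjoin L S :=
    fun a => hadj _ (hAmem (Algebra.adjoin k S) Algebra.subset_adjoin a)
  have htop : IntermediateField.adjoin L S = ⊤ := by
    rw [eq_top_iff]
    intro c _
    obtain ⟨a, b, hb, rfl⟩ := IsFractionRing.div_surjective (A := A) c
    exact div_mem (hmem a) (hmem b)
  haveI : FiniteDimensional L K := by
    haveI : FiniteDimensional L (IntermediateField.adjoin L S) :=
      IntermediateField.finiteDimensional_adjoin
        (fun y _ => (halgL.isAlgebraic y).isIntegral)
    rw [htop] at this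
    exact (IntermediateField.topEquiv (F := L) (E := K)).toLinearEquiv.finiteDimensional
  obtain ⟨y, hy⟩ := Field.exists_primitive_element L K
  refine ⟨y, ?_⟩
  have hleft := IntermediateField.adjoin_adjoin_left (F := k) (E := K) (S := {x}) {y}
  rw [show IntermediateField.adjoin (↥(IntermediateField.adjoin k {x})) {y} = (⊤ : IntermediateField L K) from hy,
    IntermediateField.restrictScalars_top, Set.singleton_union] at hleft
  exact hleft.symm
end

section
/- Fix λ ∈ ℝ and let μ : ℝ³ → ℝ² be the map μ(a,b,c) = (a, b + λc). Let X₀ ⊆ ℝ³ and Y₀ ⊆ ℝ² with O = (0,0,0) ∉ X₀ and (0,0) ∉ Y₀, and assume μ maps X₀ onto Y₀ (μ '' X₀ = Y₀). Let τ : ℝ² → ℝ³ satisfy τ(μ(p)) = p for all p ∈ X₀, τ(w) ∈ X₀ for all w ∈ Y₀, and Tendsto τ (𝓝[Y₀] (0,0)) (𝓝 O). Then for every function q : ℝ³ → ℝ and every L ∈ ℝ: Tendsto q (𝓝[X₀] O) (𝓝 L) if and only if Tendsto (q ∘ τ) (𝓝[Y₀] (0,0)) (𝓝 L). -/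
open Filter Topology

/-- Reduction of a limit along a (punctured) space curve `X₀` to a limit along a
birationally equivalent (punctured) plane curve `Y₀`, via the projection
`μ(a,b,c) = (a, b + λc)` and its rational inverse `τ`. -/
theorem limit_along_space_curve_iff_plane_curve
    (lam : ℝ) (X₀ : Set (ℝ × ℝ × ℝ)) (Y₀ : Set (ℝ × ℝ))
    (hX₀ : ((0 : ℝ), (0 : ℝ), (0 : ℝ)) ∉ X₀) (hY₀ : ((0 : ℝ), (0 : ℝ)) ∉ Y₀)
    (himage : (fun p : ℝ × ℝ × ℝ => (p.1, p.2.1 + lam * p.2.2)) '' X₀ = Y₀)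
    (τ : ℝ × ℝ → ℝ × ℝ × ℝ)
    (hτμ : ∀ p ∈ X₀, τ (p.1, p.2.1 + lam * p.2.2) = p)
    (hτY : ∀ w ∈ Y₀, τ w ∈ X₀)
    (hτcont : Tendsto τ (𝓝[Y₀] ((0 : ℝ), (0 : ℝ))) (𝓝 ((0 : ℝ), (0 : ℝ), (0 : ℝ))))
    (q : ℝ × ℝ × ℝ → ℝ) (L : ℝ) :
    Tendsto q (𝓝[X₀] ((0 : ℝ), (0 : ℝ), (0 : ℝ))) (𝓝 L) ↔
      Tendsto (q ∘ τ) (𝓝[Y₀] ((0 : ℝ), (0 : ℝ))) (𝓝 L) := by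
  set μ : ℝ × ℝ × ℝ → ℝ × ℝ := fun p => (p.1, p.2.1 + lam * p.2.2) with hμ
  have hτX : Tendsto τ (𝓝[Y₀] ((0:ℝ),(0:ℝ))) (𝓝[X₀] ((0:ℝ),(0:ℝ),(0:ℝ))) := by
    rw [tendsto_nhdsWithin_iff]
    exact ⟨hτcont, eventually_nhdsWithin_of_forall hτY⟩
  have hμcont : Continuous μ := by
    apply Continuous.prodMk continuous_fst
    exact (continuous_fst.comp continuous_snd).add
      (continuous_const.mul (continuous_snd.comp continuous_snd))
  have hμX : Tendsto μ (𝓝[X₀] ((0:ℝ),(0:ℝ),(0:ℝ))) (𝓝[Y₀] ((0:ℝ),(0:ℝ))) := by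
    rw [tendsto_nhdsWithin_iff]
    constructor
    · have h1 : Tendsto μ (𝓝[X₀] ((0:ℝ),(0:ℝ),(0:ℝ))) (𝓝 (μ ((0:ℝ),(0:ℝ),(0:ℝ)))) :=
        (hμcont.continuousAt).tendsto.mono_left nhdsWithin_le_nhds
      simpa [hμ] using h1
    · refine eventually_nhdsWithin_of_forall (fun p hp => ?_)
      rw [← himage]; exact ⟨p, hp, rfl⟩
  constructor
  · intro h
    exact h.comp hτX
  · intro h
    have := h.comp hμX
    refine this.congr' ?_
    filter_upwards [eventually_mem_nhdsWithin] with p hp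
    simp [Function.comp, hμ, hτμ p hp]
end

section
/- Let h ∈ ℝ[x,y,z] satisfy h(O) = 0 and ∇h(O) ≠ (0,0,0), where O = (0,0,0). Then there exists a point p ∈ ℝ³ with p ≠ O, h(p) = 0, ∇h(p) ≠ (0,0,0), and such that ∇h(p) is not a scalar multiple of p, i.e., for every λ ∈ ℝ one has ∇h(p) ≠ λ·p. -/
open MvPolynomial Filter

noncomputable section

theorem hasStrictFDerivAt_mveval {n : ℕ} (p : MvPolynomial (Fin n) ℝ) (x : Fin n → ℝ) :
    HasStrictFDerivAt (fun v : Fin n → ℝ => eval v p)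
      (∑ i, eval x (pderiv i p) • (ContinuousLinearMap.proj i : (Fin n → ℝ) →L[ℝ] ℝ)) x := by
  induction p using MvPolynomial.induction_on with
  | C a =>
      simp only [eval_C, pderiv_C, map_zero, zero_smul, Finset.sum_const_zero]
      exact hasStrictFDerivAt_const a x
  | add p q hp hq =>
      simp only [map_add, add_smul, Finset.sum_add_distrib]
      exact hp.add hq
  | mul_X p i hp =>
      have hX : HasStrictFDerivAt (fun v : Fin n → ℝ => v i)
          (ContinuousLinearMap.proj i : (Fin n → ℝ) →L[ℝ] ℝ) x :=
        (ContinuousLinearMap.proj i : (Fin n → ℝ) →L[ℝ] ℝ).hasStrictFDerivAt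
      have hmul := hp.mul hX
      simp only [map_mul, eval_X]
      refine hmul.congr_fderiv ?_
      ext v
      simp [pderiv_mul, ContinuousLinearMap.sum_apply, mul_add, add_mul,
        Finset.sum_add_distrib, Pi.single_apply, apply_ite (eval x), ite_mul,
        Finset.sum_ite_eq, mul_assoc, Finset.mul_sum]

/-- cross product on `Fin 3 → ℝ`. -/
def cross3 (a b : Fin 3 → ℝ) : Fin 3 → ℝ := fun i =>
  if i = 0 then a 1 * b 2 - a 2 * b 1
  else if i = 1 then a 2 * b 0 - a 0 * b 2
  else a 0 * b 1 - a 1 * b 0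

theorem cross3_smul_left (s : ℝ) (a b : Fin 3 → ℝ) :
    cross3 (s • a) b = s • cross3 a b := by
  funext i; fin_cases i <;> simp [cross3] <;> ring

theorem cross3_zero_left (b : Fin 3 → ℝ) : cross3 0 b = 0 := by
  funext i; fin_cases i <;> simp [cross3]

theorem cross3_zero_right (a : Fin 3 → ℝ) : cross3 a 0 = 0 := by
  funext i; fin_cases i <;> simp [cross3]

theorem cross3_smul_self (lam : ℝ) (a : Fin 3 → ℝ) : cross3 a (lam • a) = 0 := by
  funext i; fin_cases i <;> simp [cross3] <;> ring

theorem continuous_cross3 :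
    Continuous (fun x : (Fin 3 → ℝ) × (Fin 3 → ℝ) => cross3 x.1 x.2) := by
  apply continuous_pi
  intro i
  fin_cases i <;> simp only [cross3, Fin.ext_iff, Fin.val_zero, Fin.val_one] <;>
    norm_num <;> fun_prop


theorem exists_tangent (g : Fin 3 → ℝ) (hgne : g ≠ 0) :
    ∃ u : Fin 3 → ℝ, (∑ j, g j * u j) = 0 ∧ cross3 u g ≠ 0 := by
  by_cases h01 : g 0 = 0 ∧ g 1 = 0
  · have h2 : g 2 ≠ 0 := by
      intro h2; apply hgne; funext i; fin_cases i <;> simp [h01.1, h01.2, h2]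
    refine ⟨fun i => if i = 0 then 1 else 0, ?_, ?_⟩
    · simp [Fin.sum_univ_three, h01.1]
    · intro hc
      have h1 := congrFun hc 1
      simp [cross3] at h1
      exact h2 (by linarith)
  · refine ⟨fun i => if i = 0 then g 1 else if i = 1 then -g 0 else 0, ?_, ?_⟩
    · simp [Fin.sum_univ_three]; ring
    · intro hc
      have h2 := congrFun hc 2
      simp [cross3] at h2
      rw [not_and_or] at h01
      rcases h01 with hh|hh
      · nlinarith [mul_self_pos.mpr hh, mul_self_nonneg (g 1)]
      · nlinarith [mul_self_pos.mpr hh, mul_self_nonneg (g 0)]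

end

set_option maxHeartbeats 1000000 in
/-- If the surface `{h = 0}` is nonsingular at the origin, then it has a regular real point
`p ≠ O` whose gradient `∇h(p)` is not a scalar multiple of `p`. -/
theorem exists_regular_point_gradient_not_radial (h : MvPolynomial (Fin 3) ℝ)
    (h0 : eval (0 : Fin 3 → ℝ) h = 0)
    (hgrad : (fun i => eval (0 : Fin 3 → ℝ) (pderiv i h)) ≠ (0 : Fin 3 → ℝ)) :
    ∃ p : Fin 3 → ℝ, p ≠ 0 ∧ eval p h = 0 ∧
      (fun i => eval p (pderiv i h)) ≠ (0 : Fin 3 → ℝ) ∧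
      ∀ lam : ℝ, (fun i => eval p (pderiv i h)) ≠ lam • p := by
  classical
  set g : Fin 3 → ℝ := fun i => eval (0 : Fin 3 → ℝ) (pderiv i h) with hgdef
  set f : (Fin 3 → ℝ) → ℝ := fun v => eval v h with hfdef
  set f' : (Fin 3 → ℝ) →L[ℝ] ℝ :=
    ∑ i, g i • (ContinuousLinearMap.proj i : (Fin 3 → ℝ) →L[ℝ] ℝ) with hf'def
  have hf : HasStrictFDerivAt f f' (0 : Fin 3 → ℝ) := hasStrictFDerivAt_mveval h 0
  have hf'apply : ∀ v : Fin 3 → ℝ, f' v = ∑ i, g i * v i := by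
    intro v
    simp [hf'def, ContinuousLinearMap.sum_apply]
  obtain ⟨i0, hi0⟩ : ∃ i, g i ≠ 0 := by
    by_contra hc
    push_neg at hc
    exact hgrad (funext hc)
  have hrange : f'.range = ⊤ := by
    rw [LinearMap.range_eq_top]
    intro t
    refine ⟨(t / g i0) • (Pi.single i0 1 : Fin 3 → ℝ), ?_⟩
    rw [ContinuousLinearMap.coe_coe, hf'apply]
    rw [Finset.sum_eq_single i0]
    · simp [Pi.single_apply, div_mul_eq_mul_div, hi0]
      field_simp
    · intro b _ hb
      simp [Pi.single_apply, hb]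
    · simp
  obtain ⟨u, hu_ker, hu_cross⟩ := exists_tangent g (by
    intro hgz
    exact hgrad hgz)
  have hfa : f 0 = 0 := h0
  set u₀ : f'.ker := ⟨u, by rw [LinearMap.mem_ker, ContinuousLinearMap.coe_coe]; rw [show f' u = ∑ i, g i * u i from hf'apply u]; exact hu_ker⟩ with hu₀def
  set φ : ℝ → (Fin 3 → ℝ) := fun s => hf.implicitFunction f f' hrange (f 0) (s • u₀) with hφdef
  -- the implicit function vanishes along φ
  have hsmul_tendsto : Filter.Tendsto (fun s : ℝ => s • u₀) (nhds 0) (nhds (0 : f'.ker)) := by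
    have : Continuous (fun s : ℝ => s • u₀) := continuous_id.smul continuous_const
    simpa using this.tendsto 0
  have ev1 : ∀ᶠ s in nhdsWithin (0:ℝ) {x | x ≠ 0}, eval (φ s) h = 0 := by
    have hmap := hf.map_implicitFunction_eq hrange
    have htend : Filter.Tendsto (fun s : ℝ => ((f 0 : ℝ), s • u₀))
        (nhdsWithin (0:ℝ) {x | x ≠ 0}) (nhds ((f 0 : ℝ), (0 : f'.ker))) := by
      refine Filter.Tendsto.mono_left ?_ nhdsWithin_le_nhds
      exact Filter.Tendsto.prodMk_nhds tendsto_const_nhds hsmul_tendsto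
    filter_upwards [htend.eventually hmap] with s hs
    have : f (φ s) = f 0 := hs
    rw [hfa] at this
    exact this
  -- φ 0 = 0
  have hφ0 : φ 0 = 0 := by
    show hf.implicitFunction f f' hrange (f 0) ((0:ℝ) • u₀) = 0
    rw [zero_smul]
    exact hf.implicitFunction_apply_image hrange
  -- derivative of φ at 0
  have hslope : Filter.Tendsto (slope φ 0) (nhdsWithin (0:ℝ) {x | x ≠ 0}) (nhds u) := by
    have h1 := hf.to_implicitFunction hrange
    have h2 : HasStrictFDerivAt (fun s : ℝ => s • u₀)
        ((1 : ℝ →L[ℝ] ℝ).smulRight u₀) 0 :=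
      ((1 : ℝ →L[ℝ] ℝ).smulRight u₀).hasStrictFDerivAt
    have h3 : HasStrictFDerivAt φ
        (((f'.ker).subtypeL).comp ((1 : ℝ →L[ℝ] ℝ).smulRight u₀)) 0 := by
      refine HasStrictFDerivAt.comp (0:ℝ) ?_ h2
      rw [zero_smul]
      exact h1
    have h4 := h3.hasFDerivAt.hasDerivAt
    rw [hasDerivAt_iff_tendsto_slope] at h4
    have hu : (((f'.ker).subtypeL).comp ((1 : ℝ →L[ℝ] ℝ).smulRight u₀)) 1 = u := by simp [hu₀def]
    rw [hu] at h4
    exact h4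
  -- φ tends to 0
  have hφtend : Filter.Tendsto φ (nhdsWithin (0:ℝ) {x | x ≠ 0}) (nhds (0 : Fin 3 → ℝ)) := by
    refine hf.tendsto_implicitFunction hrange tendsto_const_nhds ?_
    exact hsmul_tendsto.mono_left nhdsWithin_le_nhds
  -- gradient along φ tends to g
  have hGtend : Filter.Tendsto (fun s => (fun i => eval (φ s) (pderiv i h)))
      (nhdsWithin (0:ℝ) {x | x ≠ 0}) (nhds g) := by
    rw [tendsto_pi_nhds]
    intro i
    exact ((hasStrictFDerivAt_mveval (pderiv i h) 0).continuousAt.tendsto).comp hφtend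
  have hcross : Filter.Tendsto
      (fun s => cross3 (slope φ 0 s) (fun i => eval (φ s) (pderiv i h)))
      (nhdsWithin (0:ℝ) {x | x ≠ 0}) (nhds (cross3 u g)) :=
    (continuous_cross3.tendsto (u, g)).comp (hslope.prodMk_nhds hGtend)
  have ev2 : ∀ᶠ s in nhdsWithin (0:ℝ) {x | x ≠ 0},
      cross3 (slope φ 0 s) (fun i => eval (φ s) (pderiv i h)) ≠ 0 :=
    hcross.eventually_ne hu_cross
  have ev3 : ∀ᶠ s in nhdsWithin (0:ℝ) {x | x ≠ 0}, s ≠ (0:ℝ) :=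
    eventually_mem_nhdsWithin
  haveI hNB : (nhdsWithin (0:ℝ) {x | x ≠ 0}).NeBot :=
    (by infer_instance : (nhdsWithin (0:ℝ) ({(0:ℝ)}ᶜ)).NeBot)
  obtain ⟨s, hs1, hs2, hs0⟩ := (ev1.and (ev2.and ev3)).exists
  have hp' : s • slope φ 0 s = φ s := by
    simp [slope, hφ0, smul_smul, mul_inv_cancel₀ hs0]
  have heq : ∀ B : Fin 3 → ℝ, cross3 (φ s) B = s • cross3 (slope φ 0 s) B := by
    intro B
    rw [← hp', cross3_smul_left]
  have hkey : cross3 (φ s) (fun i => eval (φ s) (pderiv i h)) ≠ 0 := by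
    rw [heq]
    intro hc
    rcases smul_eq_zero.mp hc with h' | h'
    · exact hs0 h'
    · exact hs2 h'
  refine ⟨φ s, ?_, hs1, ?_, ?_⟩
  · intro hz
    exact hkey (by rw [hz, cross3_zero_left])
  · intro hz
    exact hkey (by rw [hz, cross3_zero_right])
  · intro lam hl
    exact hkey (by rw [hl]; exact cross3_smul_self lam (φ s))
end

section
/- Let p = (a, b, c) ∈ ℝ³ with a ≠ 0, b ≠ 0, and c ≠ 0, and let w ∈ ℝ³ be a vector that is not a scalar multiple of p. Then there exist real constants A, B, C > 0 such that the determinant of the 3×3 matrix with rows (A·a, B·b, C·c), (a, b, c), and w is nonzero. -/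
/-- Linear algebra step: if `p = (a,b,c)` has all coordinates nonzero and `w` is not a
scalar multiple of `p`, then there are positive constants `A, B, C` such that the
determinant with rows `(Aa, Bb, Cc)`, `(a,b,c)`, `w` is nonzero. -/
theorem exists_pos_constants_det_ne_zero (a b c : ℝ) (ha : a ≠ 0) (hb : b ≠ 0) (hc : c ≠ 0)
    (w : Fin 3 → ℝ) (hw : ∀ t : ℝ, w ≠ t • ![a, b, c]) :
    ∃ A B C : ℝ, 0 < A ∧ 0 < B ∧ 0 < C ∧
      Matrix.det !![A * a, B * b, C * c; a, b, c; w 0, w 1, w 2] ≠ 0 := by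
  set x : ℝ := a * (b * w 2 - c * w 1) with hx
  set y : ℝ := -(b * (a * w 2 - c * w 0)) with hy
  set z : ℝ := c * (a * w 1 - b * w 0) with hz
  have key : ¬ (x = 0 ∧ y = 0 ∧ z = 0) := by
    rintro ⟨h1, h2, h3⟩
    have m1 : b * w 2 - c * w 1 = 0 := by
      rcases mul_eq_zero.mp h1 with h | h
      · exact absurd h ha
      · exact h
    have m2 : a * w 2 - c * w 0 = 0 := by
      have := neg_eq_zero.mp h2
      rcases mul_eq_zero.mp this with h | h
      · exact absurd h hb
      · exact h
    have m3 : a * w 1 - b * w 0 = 0 := by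
      rcases mul_eq_zero.mp h3 with h | h
      · exact absurd h hc
      · exact h
    have e1 : w 1 = w 0 / a * b := by field_simp; linarith
    have e2 : w 2 = w 0 / a * c := by field_simp; linarith
    have e0 : w 0 = w 0 / a * a := by field_simp
    have hwv : w = ![w 0, w 1, w 2] := by funext i; fin_cases i <;> rfl
    apply hw (w 0 / a)
    rw [hwv]
    simp only [Matrix.smul_cons, smul_eq_mul, Matrix.smul_empty, Matrix.cons_val_zero]
    rw [← e0, ← e1, ← e2]
  have hdet : ∀ A B C : ℝ,
      Matrix.det !![A * a, B * b, C * c; a, b, c; w 0, w 1, w 2] = A * x + B * y + C * z := by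
    intro A B C
    simp [Matrix.det_fin_three, hx, hy, hz]
    ring
  by_cases hs : x + y + z ≠ 0
  · exact ⟨1, 1, 1, one_pos, one_pos, one_pos, by rw [hdet]; simpa using hs⟩
  push_neg at hs
  by_cases hxx : x ≠ 0
  · exact ⟨2, 1, 1, two_pos, one_pos, one_pos, by rw [hdet]; intro h; apply hxx; linarith⟩
  push_neg at hxx
  by_cases hyy : y ≠ 0
  · exact ⟨1, 2, 1, one_pos, two_pos, one_pos, by rw [hdet]; intro h; apply hyy; linarith⟩
  push_neg at hyy
  have hzz : z ≠ 0 := fun h => key ⟨hxx, hyy, h⟩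
  exact ⟨1, 1, 2, one_pos, one_pos, two_pos, by rw [hdet]; intro h; apply hzz; linarith⟩
end
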